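/- Let H be a Hilbert space, {e^{tA}}_{t≥0} a strongly continuous semigroup on H satisfying ‖e^{tA}‖ ≤ c₁ e^{−α t} for constants c₁ ≥ 1, α > 0. Suppose V : [0, ∞) → H is continuous and satisfies the Duhamel formula V(t) = e^{tA} V₀ + ∫₀^t e^{(t−τ)A} F(τ) dτ where ‖F(τ)‖ ≤ c ‖V(τ)‖² M for constants c, M > 0. If moreover ‖V(τ)‖ ≤ δ for all τ ≤ T with c₁ c M δ/α < 1/2, then sup_{0≤t≤T} e^{α t/2}‖V(t)‖ is bounded by a constant depending only on c₁, c, M, α, δ and ‖V₀‖ (not on T). -/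

import Mathlib

open MeasureTheory intervalIntegral

private lemma integral_exp_mul' (k a b : ℝ) (hk : k ≠ 0) :
    ∫ x in a..b, Real.exp (k * x) = (Real.exp (k * b) - Real.exp (k * a)) / k := by
  have h : ∀ x ∈ Set.uIcc a b,
      HasDerivAt (fun y => Real.exp (k * y) / k) (Real.exp (k * x)) x := by
    intro x _
    have h1 : HasDerivAt (fun y => Real.exp (k * y)) (Real.exp (k * x) * k) x := by
      have := (Real.hasDerivAt_exp (k * x)).comp x ((hasDerivAt_id x).const_mul k)
      simpa [mul_comm, Function.comp_def] using this
    have := h1.div_const k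
    rw [mul_div_cancel_right₀ _ hk] at this
    exact this
  rw [intervalIntegral.integral_eq_sub_of_hasDerivAt h
    ((Real.continuous_exp.comp (continuous_const.mul continuous_id)).intervalIntegrable a b)]
  ring

theorem abstract_bootstrap_estimate
    (H : Type*) [NormedAddCommGroup H] [InnerProductSpace ℝ H] [CompleteSpace H]
    (c₁ c M α δ : ℝ) (hc₁ : 1 ≤ c₁) (hc : 0 < c) (hM : 0 < M) (hα : 0 < α) (hδ : 0 < δ)
    (V₀ : H) :
    ∃ B : ℝ, ∀ (T : ℝ), 0 ≤ T → ∀ (S : ℝ → H →L[ℝ] H) (V : ℝ → H) (F : ℝ → H),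
      (S 0 = ContinuousLinearMap.id ℝ H) →
      (∀ s t : ℝ, 0 ≤ s → 0 ≤ t → S (s + t) = (S s).comp (S t)) →
      (Continuous fun t : ℝ => S t V₀) →
      (∀ t : ℝ, 0 ≤ t → ‖S t‖ ≤ c₁ * Real.exp (-α * t)) →
      Continuous V →
      (∀ t ∈ Set.Icc (0:ℝ) T, V t = S t V₀ + ∫ τ in (0:ℝ)..t, S (t - τ) (F τ)) →
      (∀ τ ∈ Set.Icc (0:ℝ) T, ‖F τ‖ ≤ c * ‖V τ‖ ^ 2 * M) →
      (∀ τ ∈ Set.Icc (0:ℝ) T, ‖V τ‖ ≤ δ) →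
      c₁ * c * M * δ / α < 1 / 2 →
      ∀ t ∈ Set.Icc (0:ℝ) T, Real.exp (α * t / 2) * ‖V t‖ ≤ B := by
  set k : ℝ := 2 * (c₁ * c * M * δ / α) with hkdef
  refine ⟨max 0 (c₁ * ‖V₀‖ / (1 - k)), ?_⟩
  intro T hT S V F hS0 hSsg hScont hSnorm hVcont hDuh hF hVδ hhalf t ht
  have hk1 : k < 1 := by rw [hkdef]; linarith
  have hc₁0 : (0:ℝ) < c₁ := lt_of_lt_of_le one_pos hc₁
  -- maximizer of φ on [0,T]
  set φ : ℝ → ℝ := fun s => Real.exp (α * s / 2) * ‖V s‖ with hφdef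
  have hφcont : Continuous φ :=
    (Real.continuous_exp.comp (continuous_const.mul continuous_id |>.div_const 2)).mul
      hVcont.norm
  obtain ⟨t₀, ht₀, hmax⟩ := (isCompact_Icc (a := (0:ℝ)) (b := T)).exists_isMaxOn
    ⟨0, Set.left_mem_Icc.2 hT⟩ hφcont.continuousOn
  set N : ℝ := φ t₀ with hNdef
  have hN0 : 0 ≤ N := mul_nonneg (Real.exp_pos _).le (norm_nonneg _)
  have hmax' : ∀ s ∈ Set.Icc (0:ℝ) T, φ s ≤ N := fun s hs => hmax hs
  -- key estimate
  have key : ∀ s ∈ Set.Icc (0:ℝ) T, φ s ≤ c₁ * ‖V₀‖ + k * N := by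
    intro s hs
    obtain ⟨hs0, hsT⟩ := hs
    -- bound on ‖V s‖
    have hVs : ‖V s‖ ≤ c₁ * Real.exp (-α * s) * ‖V₀‖ +
        ‖∫ τ in (0:ℝ)..s, S (s - τ) (F τ)‖ := by
      rw [hDuh s ⟨hs0, hsT⟩]
      refine (norm_add_le _ _).trans ?_
      gcongr
      calc ‖S s V₀‖ ≤ ‖S s‖ * ‖V₀‖ := (S s).le_opNorm V₀
        _ ≤ c₁ * Real.exp (-α * s) * ‖V₀‖ :=
          mul_le_mul_of_nonneg_right (hSnorm s hs0) (norm_nonneg _)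
    -- bound the integral
    set C : ℝ := c₁ * c * M * δ * N * Real.exp (-α * s) with hCdef
    have hC0 : 0 ≤ C :=
      mul_nonneg (by positivity) (Real.exp_pos _).le
    have hbound : ∀ τ ∈ Set.uIoc (0:ℝ) s, ‖S (s - τ) (F τ)‖ ≤ C * Real.exp (α / 2 * τ) := by
      intro τ hτ
      rw [Set.uIoc_of_le hs0] at hτ
      obtain ⟨hτ0, hτs⟩ := hτ
      have hτT : τ ∈ Set.Icc (0:ℝ) T := ⟨hτ0.le, hτs.trans hsT⟩
      have hVτN : ‖V τ‖ ≤ Real.exp (-(α * τ / 2)) * N := by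
        have h1 := hmax' τ hτT
        have h2 : Real.exp (-(α * τ / 2)) * (Real.exp (α * τ / 2) * ‖V τ‖) ≤
            Real.exp (-(α * τ / 2)) * N :=
          mul_le_mul_of_nonneg_left h1 (Real.exp_pos _).le
        calc ‖V τ‖ = Real.exp (-(α * τ / 2)) * (Real.exp (α * τ / 2) * ‖V τ‖) := by
              rw [← mul_assoc, ← Real.exp_add]; simp
          _ ≤ _ := h2
      have hFτ : ‖F τ‖ ≤ c * (δ * (Real.exp (-(α * τ / 2)) * N)) * M := by
        refine (hF τ hτT).trans ?_
        have hsq : ‖V τ‖ ^ 2 ≤ δ * (Real.exp (-(α * τ / 2)) * N) := by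
          calc ‖V τ‖ ^ 2 = ‖V τ‖ * ‖V τ‖ := sq ‖V τ‖
            _ ≤ δ * (Real.exp (-(α * τ / 2)) * N) :=
              mul_le_mul (hVδ τ hτT) hVτN (norm_nonneg _) hδ.le
        exact mul_le_mul_of_nonneg_right (mul_le_mul_of_nonneg_left hsq hc.le) hM.le
      calc ‖S (s - τ) (F τ)‖ ≤ ‖S (s - τ)‖ * ‖F τ‖ := (S (s - τ)).le_opNorm _
        _ ≤ (c₁ * Real.exp (-α * (s - τ))) * (c * (δ * (Real.exp (-(α * τ / 2)) * N)) * M) := by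
            refine mul_le_mul (hSnorm _ (by linarith)) hFτ (norm_nonneg _) ?_
            positivity
        _ = C * Real.exp (α / 2 * τ) := by
            have hee : Real.exp (-α * (s - τ)) * Real.exp (-(α * τ / 2)) =
                Real.exp (-α * s) * Real.exp (α / 2 * τ) := by
              rw [← Real.exp_add, ← Real.exp_add]; ring_nf
            rw [hCdef]
            linear_combination (c₁ * c * δ * N * M) * hee
    have hgint : IntervalIntegrable (fun τ => C * Real.exp (α / 2 * τ)) volume 0 s :=
      ((continuous_const.mul (Real.continuous_exp.comp
        (continuous_const.mul continuous_id))).intervalIntegrable 0 s)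
    have hInorm : ‖∫ τ in (0:ℝ)..s, S (s - τ) (F τ)‖ ≤
        |∫ τ in (0:ℝ)..s, C * Real.exp (α / 2 * τ)| :=
      intervalIntegral.norm_integral_le_abs_of_norm_le
        (MeasureTheory.ae_restrict_of_forall_mem measurableSet_uIoc hbound) hgint
    have hcalc : ∫ τ in (0:ℝ)..s, C * Real.exp (α / 2 * τ) =
        C * ((Real.exp (α / 2 * s) - 1) / (α / 2)) := by
      rw [intervalIntegral.integral_const_mul, integral_exp_mul' (α / 2) 0 s (ne_of_gt (by linarith))]
      simp
    have hval0 : 0 ≤ C * ((Real.exp (α / 2 * s) - 1) / (α / 2)) := by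
      have : (1:ℝ) ≤ Real.exp (α / 2 * s) := Real.one_le_exp (by positivity)
      have h2 : 0 ≤ (Real.exp (α / 2 * s) - 1) / (α / 2) :=
        div_nonneg (by linarith) (by linarith)
      exact mul_nonneg hC0 h2
    have hI : ‖∫ τ in (0:ℝ)..s, S (s - τ) (F τ)‖ ≤
        C * ((Real.exp (α / 2 * s) - 1) / (α / 2)) := by
      rw [hcalc, abs_of_nonneg hval0] at hInorm; exact hInorm
    -- combine
    have hVs2 : ‖V s‖ ≤ c₁ * Real.exp (-α * s) * ‖V₀‖ +
        C * ((Real.exp (α / 2 * s) - 1) / (α / 2)) := hVs.trans (by linarith)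
    have hφs : φ s ≤ Real.exp (α * s / 2) * (c₁ * Real.exp (-α * s) * ‖V₀‖ +
        C * ((Real.exp (α / 2 * s) - 1) / (α / 2))) := by
      rw [hφdef]
      exact mul_le_mul_of_nonneg_left hVs2 (Real.exp_pos _).le
    -- now the exponential arithmetic
    set x : ℝ := Real.exp (α * s / 2) with hxdef
    have hx1 : (1:ℝ) ≤ x := Real.one_le_exp (by positivity)
    have hx0 : (0:ℝ) < x := lt_of_lt_of_le one_pos hx1
    have hes : Real.exp (-α * s) = x⁻¹ * x⁻¹ := by
      rw [hxdef, ← Real.exp_neg, ← Real.exp_add]; ring_nf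
    have hes2 : Real.exp (α / 2 * s) = x := by rw [hxdef]; ring_nf
    refine hφs.trans ?_
    rw [hes, hes2, hCdef, hes]
    have hxinv : x * x⁻¹ = 1 := mul_inv_cancel₀ hx0.ne'
    have hK0 : 0 ≤ c₁ * c * M * δ * N := by positivity
    have hV₀0 : 0 ≤ ‖V₀‖ := norm_nonneg _
    have hexpand : x * (c₁ * (x⁻¹ * x⁻¹) * ‖V₀‖ +
        c₁ * c * M * δ * N * (x⁻¹ * x⁻¹) * ((x - 1) / (α / 2))) =
        c₁ * ‖V₀‖ * x⁻¹ + k * N * (1 - x⁻¹) := by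
      rw [hkdef]
      field_simp
    rw [hexpand]
    have hxi0 : 0 < x⁻¹ := inv_pos.2 hx0
    have hxi1 : x⁻¹ ≤ 1 := by
      rw [inv_le_one_iff₀]; right; exact hx1
    have hk0 : 0 ≤ k := by rw [hkdef]; positivity
    nlinarith [mul_nonneg hc₁0.le hV₀0, mul_nonneg hk0 hN0]
  -- conclude
  have hNb : N ≤ c₁ * ‖V₀‖ / (1 - k) := by
    have h1 : N ≤ c₁ * ‖V₀‖ + k * N := key t₀ ht₀
    rw [le_div_iff₀ (by linarith : (0:ℝ) < 1 - k)]
    nlinarith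
  calc Real.exp (α * t / 2) * ‖V t‖ = φ t := rfl
    _ ≤ N := hmax' t ht
    _ ≤ c₁ * ‖V₀‖ / (1 - k) := hNb
    _ ≤ max 0 (c₁ * ‖V₀‖ / (1 - k)) := le_max_right _ _
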